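/- Let L₁ and L₂ be Lie algebras over ℂ, M₁ a finite-dimensional complex L₁-module, and M₂ a finite-dimensional complex L₂-module. Endow M₁ ⊗ M₂ with the L₁ × L₂-module structure determined by (x₁, x₂) • (m ⊗ n) = (⁅x₁, m⁆) ⊗ n + m ⊗ (⁅x₂, n⁆). If M₁ is the internal direct sum of irreducible L₁-submodules W₁, …, W_{n₁} and M₂ is the internal direct sum of irreducible L₂-submodules U₁, …, U_{n₂}, then M₁ ⊗ M₂ is the internal direct sum of the subspaces W_j ⊗ U_l (the images of the W_j ⊗ U_l inside M₁ ⊗ M₂), each W_j ⊗ U_l is an L₁ × L₂-submodule, and each W_j ⊗ U_l is irreducible as an L₁ × L₂-module. -/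

import Mathlib

open TensorProduct

/-- The product of two Lie rings, with componentwise bracket. -/
instance prodLieRing {L₁ L₂ : Type*} [LieRing L₁] [LieRing L₂] : LieRing (L₁ × L₂) :=
  { (inferInstance : AddCommGroup (L₁ × L₂)) with
    bracket := fun x y => (⁅x.1, y.1⁆, ⁅x.2, y.2⁆)
    add_lie := fun x y z => by
      show (⁅x.1 + y.1, z.1⁆, ⁅x.2 + y.2, z.2⁆)
          = (⁅x.1, z.1⁆ + ⁅y.1, z.1⁆, ⁅x.2, z.2⁆ + ⁅y.2, z.2⁆)
      rw [add_lie, add_lie]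
    lie_add := fun x y z => by
      show (⁅x.1, y.1 + z.1⁆, ⁅x.2, y.2 + z.2⁆)
          = (⁅x.1, y.1⁆ + ⁅x.1, z.1⁆, ⁅x.2, y.2⁆ + ⁅x.2, z.2⁆)
      rw [lie_add, lie_add]
    lie_self := fun x => by
      show (⁅x.1, x.1⁆, ⁅x.2, x.2⁆) = (0, 0)
      rw [lie_self, lie_self]
    leibniz_lie := fun x y z => by
      show (⁅x.1, ⁅y.1, z.1⁆⁆, ⁅x.2, ⁅y.2, z.2⁆⁆)
          = (⁅⁅x.1, y.1⁆, z.1⁆ + ⁅y.1, ⁅x.1, z.1⁆⁆, ⁅⁅x.2, y.2⁆, z.2⁆ + ⁅y.2, ⁅x.2, z.2⁆⁆)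
      exact Prod.ext (leibniz_lie x.1 y.1 z.1) (leibniz_lie x.2 y.2 z.2) }

/-- The product of two complex Lie algebras, with componentwise bracket. -/
instance prodLieAlgebra {L₁ L₂ : Type*} [LieRing L₁] [LieAlgebra ℂ L₁]
    [LieRing L₂] [LieAlgebra ℂ L₂] : LieAlgebra ℂ (L₁ × L₂) :=
  { (inferInstance : Module ℂ (L₁ × L₂)) with
    lie_smul := fun t x y => by
      show (⁅x.1, t • y.1⁆, ⁅x.2, t • y.2⁆) = (t • ⁅x.1, y.1⁆, t • ⁅x.2, y.2⁆)
      rw [lie_smul, lie_smul] }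

open Module

set_option maxHeartbeats 1000000
set_option synthInstance.maxHeartbeats 400000

theorem burnside {V : Type*} [AddCommGroup V] [Module ℂ V] [FiniteDimensional ℂ V]
    [Nontrivial V] (A : Subalgebra ℂ (Module.End ℂ V))
    (hirr : ∀ S : Submodule ℂ V, (∀ a ∈ A, ∀ v ∈ S, a v ∈ S) → S = ⊥ ∨ S = ⊤)
    (f : Module.End ℂ V) : f ∈ A := by
  classical
  letI instA : Module ↥A V := Module.compHom V (A.val.toRingHom : ↥A →+* Module.End ℂ V)
  have hsmul : ∀ (a : ↥A) (v : V), a • v = (a : Module.End ℂ V) v := fun a v => rfl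
  have hCsmul : ∀ (c : ℂ) (v : V), ((algebraMap ℂ ↥A c) • v) = c • v := by
    intro c v
    rw [hsmul]
    show ((algebraMap ℂ (Module.End ℂ V)) c) v = c • v
    simp [Module.algebraMap_end_apply]
  -- V is a simple ↥A-module
  haveI hsimple : IsSimpleModule ↥A V := by
    refine { toIsSimpleOrder := ?_ }
    constructor
    intro S
    let Sc : Submodule ℂ V :=
      { carrier := S
        add_mem' := fun h1 h2 => S.add_mem h1 h2
        zero_mem' := S.zero_mem
        smul_mem' := fun c v hv => by
          have := S.smul_mem (algebraMap ℂ ↥A c) hv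
          rw [← hCsmul]; exact this }
    have hScmem : ∀ v, v ∈ Sc ↔ v ∈ S := fun v => Iff.rfl
    have hinv : ∀ a ∈ A, ∀ v ∈ Sc, a v ∈ Sc := by
      intro a ha v hv
      have := S.smul_mem (⟨a, ha⟩ : ↥A) hv
      exact this
    rcases hirr Sc hinv with h | h
    · left; ext v
      simp only [Submodule.mem_bot]
      rw [← hScmem, h]; simp
    · right; ext v
      simp only [Submodule.mem_top, iff_true]
      rw [← hScmem v, h]; trivial
  -- Schur's lemma
  have schur : ∀ φ : V →ₗ[↥A] V, ∃ c : ℂ, ∀ v, φ v = c • v := by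
    intro φ
    let φc : Module.End ℂ V :=
      { toFun := φ
        map_add' := φ.map_add
        map_smul' := fun c v => by
          simp only [RingHom.id_apply]
          erw [← hCsmul c v, φ.map_smul, hCsmul] }
    obtain ⟨c, hc⟩ := Module.End.exists_eigenvalue φc
    obtain ⟨v, hv⟩ := hc.exists_hasEigenvector
    refine ⟨c, ?_⟩
    let K : Submodule ↥A V :=
      { carrier := {w | φ w = c • w}
        add_mem' := fun {x y} hx hy => by
          simp only [Set.mem_setOf_eq] at *
          rw [φ.map_add, hx, hy, smul_add]
        zero_mem' := by simp
        smul_mem' := fun a w hw => by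
          simp only [Set.mem_setOf_eq] at *
          erw [φ.map_smul, hw, hsmul, hsmul, LinearMap.map_smul] }
    have hK : K = ⊤ := by
      rcases hsimple.1.2 K with h | h
      · exfalso
        have hvK : v ∈ K := by
          show φ v = c • v
          exact hv.apply_eq_smul
        rw [h] at hvK
        exact hv.2 hvK
      · exact h
    intro w
    have : w ∈ K := hK ▸ Submodule.mem_top
    exact this
  -- semisimplicity of (Fin n → V)
  set n := finrank ℂ V with hn
  let b : Basis (Fin n) ℂ V := Module.finBasis ℂ V
  haveI : IsSemisimpleModule ↥A (Fin n → V) := by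
    apply isSemisimpleModule_of_isSemisimpleModule_submodule'
      (p := fun i => LinearMap.range (LinearMap.single ↥A (fun _ : Fin n => V) i))
    · intro i
      exact IsSemisimpleModule.congr
        (LinearEquiv.ofInjective (LinearMap.single ↥A (fun _ : Fin n => V) i)
          (fun x y h => Pi.single_injective i h)).symm
    · rw [eq_top_iff]
      intro x _
      rw [← Finset.univ_sum_single x]
      exact Submodule.sum_mem _ fun i _ => Submodule.mem_iSup_of_mem i ⟨x i, rfl⟩
  -- density argument
  let vb : Fin n → V := fun i => b i
  let N : Submodule ↥A (Fin n → V) := Submodule.span ↥A {vb}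
  obtain ⟨P, hP⟩ := exists_isCompl N
  let q : (Fin n → V) →ₗ[↥A] (Fin n → V) := P.subtype.comp (P.projectionOnto N hP.symm)
  have hqN : ∀ x ∈ N, q x = 0 := by
    intro x hx
    show P.subtype (P.projectionOnto N hP.symm x) = 0
    rw [Submodule.linearProjOfIsCompl_apply_right hP.symm ⟨x, hx⟩]
    simp
  have hqP : ∀ x ∈ P, q x = x := by
    intro x hx
    show P.subtype (P.projectionOnto N hP.symm x) = x
    rw [Submodule.linearProjOfIsCompl_apply_left hP.symm ⟨x, hx⟩]
    rfl
  let e : Fin n → Fin n → (V →ₗ[↥A] V) := fun i j =>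
    (LinearMap.proj i).comp (q.comp (LinearMap.single ↥A (fun _ : Fin n => V) j))
  have hc : ∀ i j, ∃ c : ℂ, ∀ v, e i j v = c • v := fun i j => schur (e i j)
  choose c hcs using hc
  have hqapply : ∀ (x : Fin n → V) (i : Fin n), q x i = ∑ j, c i j • x j := by
    intro x i
    conv_lhs => rw [← Finset.univ_sum_single x]
    rw [map_sum]
    have : (∑ j, q (Pi.single j (x j))) i = ∑ j, (q (Pi.single j (x j))) i := by
      simp [Finset.sum_apply]
    rw [this]
    congr 1
    ext j
    exact hcs i j (x j)
  have hqvb : q vb = 0 := hqN vb (Submodule.mem_span_singleton_self vb)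
  have hc0 : ∀ i j, c i j = 0 := by
    intro i
    have h1 : ∑ j, c i j • b j = 0 := by
      have := congrFun hqvb i
      rw [hqapply vb i] at this
      exact this
    exact (Fintype.linearIndependent_iff.mp b.linearIndependent) (c i) h1
  have hq0 : ∀ x, q x = 0 := by
    intro x
    funext i
    rw [hqapply, Pi.zero_apply]
    simp [hc0]
  have hPbot : P = ⊥ := by
    rw [eq_bot_iff]
    intro x hx
    have := hqP x hx
    rw [hq0 x] at this
    simp [← this]
  have hNtop : N = ⊤ := by
    have := hP.codisjoint
    rw [codisjoint_iff, hPbot, sup_bot_eq] at this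
    exact this
  -- conclude
  have : (fun i => f (b i)) ∈ N := hNtop ▸ Submodule.mem_top
  obtain ⟨a, ha⟩ := Submodule.mem_span_singleton.mp this
  have hfa : (a : Module.End ℂ V) = f := by
    apply b.ext
    intro i
    have := congrFun ha i
    rw [Pi.smul_apply, hsmul] at this
    exact this
  rw [← hfa]
  exact a.2

theorem my_tmul_ne_zero {V₁ V₂ : Type*} [AddCommGroup V₁] [Module ℂ V₁]
    [AddCommGroup V₂] [Module ℂ V₂] {v : V₁} {w : V₂} (hv : v ≠ 0) (hw : w ≠ 0) :
    v ⊗ₜ[ℂ] w ≠ 0 := by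
  have h1 : ¬ ∀ φ : Module.Dual ℂ V₁, φ v = 0 :=
    fun h => hv ((Module.forall_dual_apply_eq_zero_iff ℂ v).mp h)
  have h2 : ¬ ∀ ψ : Module.Dual ℂ V₂, ψ w = 0 :=
    fun h => hw ((Module.forall_dual_apply_eq_zero_iff ℂ w).mp h)
  push_neg at h1 h2
  obtain ⟨φ, hφ⟩ := h1
  obtain ⟨ψ, hψ⟩ := h2
  intro h0
  have := congrArg (fun t => TensorProduct.lid ℂ ℂ (TensorProduct.map φ ψ t)) h0
  simp only [TensorProduct.map_tmul, TensorProduct.lid_tmul, map_zero] at this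
  exact mul_ne_zero hφ hψ (by simpa [smul_eq_mul] using this)

theorem lie_adjoin_stable {L M : Type*} [LieRing L] [LieAlgebra ℂ L]
    [AddCommGroup M] [Module ℂ M] [LieRingModule L M] [LieModule ℂ L M]
    (S : LieSubmodule ℂ L M) {p : Module.End ℂ M}
    (hp : p ∈ Algebra.adjoin ℂ (Set.range (LieModule.toEnd ℂ L M))) :
    ∀ v ∈ S, p v ∈ S := by
  refine Algebra.adjoin_induction (hx := hp)
    (p := fun q _ => ∀ v ∈ S, q v ∈ S) ?_ ?_ ?_ ?_
  · rintro x ⟨y, rfl⟩ v hv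
    exact S.lie_mem hv
  · intro r v hv
    exact S.smul_mem r hv
  · intro x y hx hy ihx ihy v hv
    exact S.add_mem (ihx v hv) (ihy v hv)
  · intro x y hx hy ihx ihy v hv
    rw [Module.End.mul_apply]
    exact ihx _ (ihy v hv)

theorem exists_lift_end {L M : Type*} [LieRing L] [LieAlgebra ℂ L]
    [AddCommGroup M] [Module ℂ M] [LieRingModule L M] [LieModule ℂ L M]
    [FiniteDimensional ℂ M]
    (W : LieSubmodule ℂ L M) (hne : W ≠ ⊥)
    (hirr : ∀ W' ≤ W, W' = ⊥ ∨ W' = W) (a : Module.End ℂ ↥W) :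
    ∃ p ∈ Algebra.adjoin ℂ (Set.range (LieModule.toEnd ℂ L M)),
      ∀ w : ↥W, p ↑w = ↑(a w) := by
  haveI : Nontrivial ↥W := by
    refine Submodule.nontrivial_iff_ne_bot.mpr ?_
    intro h
    exact hne (by rwa [← LieSubmodule.toSubmodule_inj, LieSubmodule.bot_toSubmodule])
  haveI : FiniteDimensional ℂ ↥W := inferInstance
  have hmem : a ∈ Algebra.adjoin ℂ (Set.range (LieModule.toEnd ℂ L ↥W)) := by
    apply burnside
    intro S hinv
    let W' : LieSubmodule ℂ L M :=
      { S.map (W : Submodule ℂ M).subtype with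
        lie_mem := by
          rintro x m ⟨s, hs, rfl⟩
          have h1 : LieModule.toEnd ℂ L ↥W x ∈
              Algebra.adjoin ℂ (Set.range (LieModule.toEnd ℂ L ↥W)) :=
            Algebra.subset_adjoin ⟨x, rfl⟩
          have h2 : ⁅x, (show ↥W from s)⁆ ∈ S := by
            have := hinv _ h1 s hs
            simpa only [LieModule.toEnd_apply_apply] using this
          exact ⟨(⁅x, (show ↥W from s)⁆ : ↥W), h2, (W.coe_bracket x (show ↥W from s))⟩ }
    have hW'le : W' ≤ W := by
      rintro m ⟨s, _, rfl⟩
      exact s.2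
    have hinj : Function.Injective (Submodule.map (W : Submodule ℂ M).subtype) :=
      Submodule.map_injective_of_injective (W : Submodule ℂ M).injective_subtype
    rcases hirr W' hW'le with h | h
    · left
      have : S.map (W : Submodule ℂ M).subtype = ⊥ := by
        have := congrArg (fun N : LieSubmodule ℂ L M => (N : Submodule ℂ M)) h
        simpa [W'] using this
      apply hinj
      rw [this, Submodule.map_bot]
    · right
      have : S.map (W : Submodule ℂ M).subtype = (W : Submodule ℂ M) := by
        have := congrArg (fun N : LieSubmodule ℂ L M => (N : Submodule ℂ M)) h
        simpa [W'] using this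
      apply hinj
      rw [this, Submodule.map_subtype_top]
  refine Algebra.adjoin_induction (hx := hmem)
    (p := fun b _ => ∃ p ∈ Algebra.adjoin ℂ (Set.range (LieModule.toEnd ℂ L M)),
      ∀ w : ↥W, p ↑w = ↑(b w)) ?_ ?_ ?_ ?_
  · rintro x ⟨y, rfl⟩
    refine ⟨LieModule.toEnd ℂ L M y, Algebra.subset_adjoin ⟨y, rfl⟩, fun w => ?_⟩
    simp only [LieModule.toEnd_apply_apply]
    exact (W.coe_bracket y w).symm
  · intro r
    refine ⟨algebraMap ℂ _ r, Subalgebra.algebraMap_mem _ r, fun w => ?_⟩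
    simp [Module.algebraMap_end_apply]
  · rintro x y hx hy ⟨p, hp, hpw⟩ ⟨q, hq, hqw⟩
    refine ⟨p + q, add_mem hp hq, fun w => ?_⟩
    simp [LinearMap.add_apply, hpw w, hqw w]
  · rintro x y hx hy ⟨p, hp, hpw⟩ ⟨q, hq, hqw⟩
    refine ⟨p * q, mul_mem hp hq, fun w => ?_⟩
    rw [Module.End.mul_apply, hqw w, hpw (y w), Module.End.mul_apply]

/-- Let `M₁` be a finite-dimensional complex `L₁`-module and `M₂` a
finite-dimensional complex `L₂`-module; endow `M₁ ⊗ M₂` with the `L₁ × L₂`-module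
structure determined by `(x₁, x₂) • (m ⊗ n) = ⁅x₁, m⁆ ⊗ n + m ⊗ ⁅x₂, n⁆`. If `M₁` is the
internal direct sum of irreducible `L₁`-submodules `W j` and `M₂` is the internal direct
sum of irreducible `L₂`-submodules `U l`, then `M₁ ⊗ M₂` is the internal direct sum of the
subspaces `W j ⊗ U l`, each of which is an irreducible `L₁ × L₂`-submodule. -/
theorem tensorProduct_decomposition_boxtimes
    {L₁ L₂ : Type*} [LieRing L₁] [LieAlgebra ℂ L₁] [LieRing L₂] [LieAlgebra ℂ L₂]
    {M₁ M₂ : Type*}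
    [AddCommGroup M₁] [Module ℂ M₁] [LieRingModule L₁ M₁] [LieModule ℂ L₁ M₁]
    [FiniteDimensional ℂ M₁]
    [AddCommGroup M₂] [Module ℂ M₂] [LieRingModule L₂ M₂] [LieModule ℂ L₂ M₂]
    [FiniteDimensional ℂ M₂]
    [LieRingModule (L₁ × L₂) (M₁ ⊗[ℂ] M₂)] [LieModule ℂ (L₁ × L₂) (M₁ ⊗[ℂ] M₂)]
    (haction : ∀ (x₁ : L₁) (x₂ : L₂) (m : M₁) (n : M₂),
      ⁅((x₁, x₂) : L₁ × L₂), m ⊗ₜ[ℂ] n⁆ = ⁅x₁, m⁆ ⊗ₜ[ℂ] n + m ⊗ₜ[ℂ] ⁅x₂, n⁆)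
    (n₁ n₂ : ℕ)
    (W : Fin n₁ → LieSubmodule ℂ L₁ M₁) (U : Fin n₂ → LieSubmodule ℂ L₂ M₂)
    (hWind : ∀ j, Disjoint (W j) (⨆ j' ≠ j, W j')) (hWsup : (⨆ j, W j) = ⊤)
    (hWirr : ∀ j, W j ≠ ⊥ ∧ ∀ W' ≤ W j, W' = ⊥ ∨ W' = W j)
    (hUind : ∀ l, Disjoint (U l) (⨆ l' ≠ l, U l')) (hUsup : (⨆ l, U l) = ⊤)
    (hUirr : ∀ l, U l ≠ ⊥ ∧ ∀ U' ≤ U l, U' = ⊥ ∨ U' = U l) :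
    ∃ T : Fin n₁ → Fin n₂ → LieSubmodule ℂ (L₁ × L₂) (M₁ ⊗[ℂ] M₂),
      (∀ j l, (T j l).toSubmodule
        = Submodule.map₂ (TensorProduct.mk ℂ M₁ M₂) (W j).toSubmodule (U l).toSubmodule) ∧
      (∀ p : Fin n₁ × Fin n₂, Disjoint (T p.1 p.2) (⨆ q ≠ p, T q.1 q.2)) ∧
      (⨆ p : Fin n₁ × Fin n₂, T p.1 p.2) = ⊤ ∧
      (∀ j l, T j l ≠ ⊥ ∧ ∀ T' ≤ T j l, T' = ⊥ ∨ T' = T j l) := by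
  classical
  -- T is a Lie submodule
  have key_lie : ∀ (j : Fin n₁) (l : Fin n₂) (x : L₁ × L₂) (m : M₁ ⊗[ℂ] M₂),
      m ∈ Submodule.map₂ (TensorProduct.mk ℂ M₁ M₂) (W j).toSubmodule (U l).toSubmodule →
      ⁅x, m⁆ ∈ Submodule.map₂ (TensorProduct.mk ℂ M₁ M₂) (W j).toSubmodule (U l).toSubmodule := by
    intro j l x m hm
    obtain ⟨x₁, x₂⟩ := x
    rw [Submodule.map₂_eq_span_image2] at hm
    refine Submodule.span_induction ?_ ?_ ?_ ?_ hm
    · rintro _ ⟨w, hw, u, hu, rfl⟩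
      simp only [TensorProduct.mk_apply]
      rw [haction]
      exact Submodule.add_mem _
        (Submodule.apply_mem_map₂ _ ((W j).lie_mem hw) hu)
        (Submodule.apply_mem_map₂ _ hw ((U l).lie_mem hu))
    · simpa using Submodule.zero_mem _
    · intro a b _ _ ha hb
      rw [lie_add]
      exact Submodule.add_mem _ ha hb
    · intro c a _ ha
      rw [lie_smul]
      exact Submodule.smul_mem _ c ha
  set T : Fin n₁ → Fin n₂ → LieSubmodule ℂ (L₁ × L₂) (M₁ ⊗[ℂ] M₂) := fun j l =>
    { Submodule.map₂ (TensorProduct.mk ℂ M₁ M₂) (W j).toSubmodule (U l).toSubmodule with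
      lie_mem := fun {x m} hm => key_lie j l x m hm } with hTdef
  have hT : ∀ j l, (T j l).toSubmodule
      = Submodule.map₂ (TensorProduct.mk ℂ M₁ M₂) (W j).toSubmodule (U l).toSubmodule :=
    fun j l => rfl
  -- supremum
  have hWsup' : (⨆ j, (W j : Submodule ℂ M₁)) = ⊤ := by
    rw [← LieSubmodule.iSup_toSubmodule, hWsup, LieSubmodule.top_toSubmodule]
  have hUsup' : (⨆ l, (U l : Submodule ℂ M₂)) = ⊤ := by
    rw [← LieSubmodule.iSup_toSubmodule, hUsup, LieSubmodule.top_toSubmodule]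
  have hsup : (⨆ p : Fin n₁ × Fin n₂, T p.1 p.2) = ⊤ := by
    rw [← LieSubmodule.toSubmodule_inj, LieSubmodule.iSup_toSubmodule,
      LieSubmodule.top_toSubmodule]
    rw [iSup_prod (f := fun p : Fin n₁ × Fin n₂ => ((T p.1 p.2 : LieSubmodule ℂ (L₁ × L₂) (M₁ ⊗[ℂ] M₂)) : Submodule ℂ (M₁ ⊗[ℂ] M₂)))]
    have step : ∀ i : Fin n₁,
        (⨆ l, ((T i l : LieSubmodule ℂ (L₁ × L₂) (M₁ ⊗[ℂ] M₂)) : Submodule ℂ (M₁ ⊗[ℂ] M₂)))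
        = Submodule.map₂ (TensorProduct.mk ℂ M₁ M₂) (W i).toSubmodule ⊤ := by
      intro i
      simp only [hT]
      rw [← Submodule.map₂_iSup_right, hUsup']
    simp only [step]
    rw [← Submodule.map₂_iSup_left, hWsup', TensorProduct.map₂_mk_top_top_eq_top]
  -- projections
  have hproj : ∀ j : Fin n₁, ∃ π : M₁ →ₗ[ℂ] M₁,
      (∀ w ∈ (W j : Submodule ℂ M₁), π w = w) ∧
      (∀ j' ≠ j, ∀ w ∈ (W j' : Submodule ℂ M₁), π w = 0) := by
    intro j
    set CL : LieSubmodule ℂ L₁ M₁ := ⨆ j' ≠ j, W j' with hCL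
    have hdis : Disjoint (W j : Submodule ℂ M₁) (CL : Submodule ℂ M₁) :=
      LieSubmodule.disjoint_toSubmodule.mpr (hWind j)
    have hcodL : W j ⊔ CL = ⊤ := by
      rw [← hWsup]
      refine le_antisymm ?_ ?_
      · exact sup_le (le_iSup W j) (iSup₂_le fun j' _ => le_iSup W j')
      · refine iSup_le fun j' => ?_
        by_cases h : j' = j
        · subst h; exact le_sup_left
        · exact le_trans (le_iSup₂ (f := fun j' (_ : j' ≠ j) => W j') j' h) le_sup_right
    have hcompl : IsCompl (W j : Submodule ℂ M₁) (CL : Submodule ℂ M₁) := by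
      refine ⟨hdis, codisjoint_iff.mpr ?_⟩
      rw [← LieSubmodule.sup_toSubmodule, hcodL, LieSubmodule.top_toSubmodule]
    refine ⟨(W j : Submodule ℂ M₁).subtype ∘ₗ
      Submodule.projectionOnto _ _ hcompl, fun w hw => ?_, fun j' hj' w hw => ?_⟩
    · have := Submodule.linearProjOfIsCompl_apply_left hcompl ⟨w, hw⟩
      simp only [LinearMap.comp_apply, this]
      rfl
    · have hwC : w ∈ (CL : Submodule ℂ M₁) := by
        have hle : W j' ≤ CL := le_iSup₂ (f := fun j'' (_ : j'' ≠ j) => W j'') j' hj'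
        exact hle hw
      have := Submodule.linearProjOfIsCompl_apply_right hcompl ⟨w, hwC⟩
      simp only [LinearMap.comp_apply, this]
      rfl
  have hprojU : ∀ l : Fin n₂, ∃ σ : M₂ →ₗ[ℂ] M₂,
      (∀ u ∈ (U l : Submodule ℂ M₂), σ u = u) ∧
      (∀ l' ≠ l, ∀ u ∈ (U l' : Submodule ℂ M₂), σ u = 0) := by
    intro l
    set CL : LieSubmodule ℂ L₂ M₂ := ⨆ l' ≠ l, U l' with hCL
    have hdis : Disjoint (U l : Submodule ℂ M₂) (CL : Submodule ℂ M₂) :=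
      LieSubmodule.disjoint_toSubmodule.mpr (hUind l)
    have hcodL : U l ⊔ CL = ⊤ := by
      rw [← hUsup]
      refine le_antisymm ?_ ?_
      · exact sup_le (le_iSup U l) (iSup₂_le fun l' _ => le_iSup U l')
      · refine iSup_le fun l' => ?_
        by_cases h : l' = l
        · subst h; exact le_sup_left
        · exact le_trans (le_iSup₂ (f := fun l' (_ : l' ≠ l) => U l') l' h) le_sup_right
    have hcompl : IsCompl (U l : Submodule ℂ M₂) (CL : Submodule ℂ M₂) := by
      refine ⟨hdis, codisjoint_iff.mpr ?_⟩
      rw [← LieSubmodule.sup_toSubmodule, hcodL, LieSubmodule.top_toSubmodule]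
    refine ⟨(U l : Submodule ℂ M₂).subtype ∘ₗ
      Submodule.projectionOnto _ _ hcompl, fun u hu => ?_, fun l' hl' u hu => ?_⟩
    · have := Submodule.linearProjOfIsCompl_apply_left hcompl ⟨u, hu⟩
      simp only [LinearMap.comp_apply, this]
      rfl
    · have huC : u ∈ (CL : Submodule ℂ M₂) := by
        have hle : U l' ≤ CL := le_iSup₂ (f := fun l'' (_ : l'' ≠ l) => U l'') l' hl'
        exact hle hu
      have := Submodule.linearProjOfIsCompl_apply_right hcompl ⟨u, huC⟩
      simp only [LinearMap.comp_apply, this]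
      rfl
  choose π hπ1 hπ2 using hproj
  choose σ hσ1 hσ2 using hprojU
  -- disjointness
  have hdisj : ∀ p : Fin n₁ × Fin n₂, Disjoint (T p.1 p.2) (⨆ q ≠ p, T q.1 q.2) := by
    intro p
    rw [← LieSubmodule.disjoint_toSubmodule]
    rw [Submodule.disjoint_def]
    intro x hx1 hx2
    set P : M₁ ⊗[ℂ] M₂ →ₗ[ℂ] M₁ ⊗[ℂ] M₂ := TensorProduct.map (π p.1) (σ p.2) with hPdef
    have hPid : ∀ m ∈ (T p.1 p.2 : Submodule ℂ (M₁ ⊗[ℂ] M₂)), P m = m := by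
      intro m hm
      rw [hT, Submodule.map₂_eq_span_image2] at hm
      refine Submodule.span_induction ?_ ?_ ?_ ?_ hm
      · rintro _ ⟨w, hw, u, hu, rfl⟩
        simp only [TensorProduct.mk_apply, hPdef, TensorProduct.map_tmul]
        rw [hπ1 p.1 w hw, hσ1 p.2 u hu]
      · exact map_zero _
      · intro a b _ _ ha hb; rw [map_add, ha, hb]
      · intro c a _ ha; rw [map_smul, ha]
    have hP0 : ∀ q : Fin n₁ × Fin n₂, q ≠ p →
        ∀ m ∈ (T q.1 q.2 : Submodule ℂ (M₁ ⊗[ℂ] M₂)), P m = 0 := by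
      intro q hq m hm
      rw [hT, Submodule.map₂_eq_span_image2] at hm
      refine Submodule.span_induction ?_ ?_ ?_ ?_ hm
      · rintro _ ⟨w, hw, u, hu, rfl⟩
        simp only [TensorProduct.mk_apply, hPdef, TensorProduct.map_tmul]
        by_cases h1 : q.1 = p.1
        · have h2 : q.2 ≠ p.2 := fun h2 => hq (Prod.ext h1 h2)
          rw [hσ2 p.2 q.2 h2 u hu, TensorProduct.tmul_zero]
        · rw [hπ2 p.1 q.1 h1 w hw, TensorProduct.zero_tmul]
      · exact map_zero _
      · intro a b _ _ ha hb; rw [map_add, ha, hb, add_zero]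
      · intro c a _ ha; rw [map_smul, ha, smul_zero]
    have hx2' : P x = 0 := by
      simp only [LieSubmodule.iSup_toSubmodule] at hx2
      refine Submodule.iSup_induction _ (motive := fun m => P m = 0) hx2 ?_ (map_zero _) ?_
      · intro q m hm
        by_cases hq : q ≠ p
        · rw [iSup_pos hq] at hm
          exact hP0 q hq m hm
        · rw [iSup_neg hq] at hm
          simp only [Submodule.mem_bot] at hm
          rw [hm, map_zero]
      · intro a b ha hb; rw [map_add, ha, hb, add_zero]
    rw [← hPid x hx1, hx2']
  -- irreducibility and nontriviality

  have hirrT : ∀ j l, T j l ≠ ⊥ ∧ ∀ T' ≤ T j l, T' = ⊥ ∨ T' = T j l := by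
    intro j l
    have hWne := (hWirr j).1
    have hUne := (hUirr l).1
    set Ws : Submodule ℂ M₁ := (W j : Submodule ℂ M₁) with hWs
    set Us : Submodule ℂ M₂ := (U l : Submodule ℂ M₂) with hUs
    have hWsne : Ws ≠ ⊥ := fun h => hWne
      ((LieSubmodule.toSubmodule_inj _ _).mp
        (by rw [LieSubmodule.bot_toSubmodule]; exact h))
    have hUsne : Us ≠ ⊥ := fun h => hUne
      ((LieSubmodule.toSubmodule_inj _ _).mp
        (by rw [LieSubmodule.bot_toSubmodule]; exact h))
    haveI : Nontrivial ↥Ws := Submodule.nontrivial_iff_ne_bot.mpr hWsne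
    haveI : Nontrivial ↥Us := Submodule.nontrivial_iff_ne_bot.mpr hUsne
    set ι : (↥Ws ⊗[ℂ] ↥Us) →ₗ[ℂ] M₁ ⊗[ℂ] M₂ := TensorProduct.mapIncl Ws Us with hιdef
    have hι_inj : Function.Injective ι := by
      have h1 : ι = (LinearMap.rTensor M₂ Ws.subtype) ∘ₗ (LinearMap.lTensor ↥Ws Us.subtype) :=
        (LinearMap.rTensor_comp_lTensor _ _ _).symm
      rw [h1, LinearMap.coe_comp]
      exact Function.Injective.comp
        (Module.Flat.rTensor_preserves_injective_linearMap _ Ws.injective_subtype)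
        (Module.Flat.lTensor_preserves_injective_linearMap _ Us.injective_subtype)
    have hι_range : LinearMap.range ι = Submodule.map₂ (TensorProduct.mk ℂ M₁ M₂) Ws Us := by
      rw [TensorProduct.range_mapIncl, Submodule.map₂_eq_span_image2]
    -- operators from the adjoin act on Lie submodules of the tensor product
    have hrT : ∀ p ∈ Algebra.adjoin ℂ (Set.range (LieModule.toEnd ℂ L₁ M₁)),
        LinearMap.rTensor M₂ p ∈ Algebra.adjoin ℂ
          (Set.range (LieModule.toEnd ℂ (L₁ × L₂) (M₁ ⊗[ℂ] M₂))) := by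
      intro p hp
      refine Algebra.adjoin_induction (hx := hp)
        (p := fun q _ => LinearMap.rTensor M₂ q ∈ Algebra.adjoin ℂ
          (Set.range (LieModule.toEnd ℂ (L₁ × L₂) (M₁ ⊗[ℂ] M₂)))) ?_ ?_ ?_ ?_
      · rintro _ ⟨x₁, rfl⟩
        have heq : LinearMap.rTensor M₂ (LieModule.toEnd ℂ L₁ M₁ x₁)
            = LieModule.toEnd ℂ (L₁ × L₂) (M₁ ⊗[ℂ] M₂) (x₁, 0) := by
          apply TensorProduct.ext'
          intro m n
          simp only [LinearMap.rTensor_tmul, LieModule.toEnd_apply_apply]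
          rw [haction, zero_lie, TensorProduct.tmul_zero, add_zero]
        rw [heq]
        exact Algebra.subset_adjoin ⟨(x₁, 0), rfl⟩
      · intro r
        have heq : LinearMap.rTensor M₂ (algebraMap ℂ (Module.End ℂ M₁) r)
            = algebraMap ℂ (Module.End ℂ (M₁ ⊗[ℂ] M₂)) r := by
          apply TensorProduct.ext'
          intro m n
          simp only [LinearMap.rTensor_tmul, Module.algebraMap_end_apply]
          rw [TensorProduct.smul_tmul']
        rw [heq]
        exact Subalgebra.algebraMap_mem _ r
      · intro x y _ _ hx hy
        rw [LinearMap.rTensor_add]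
        exact add_mem hx hy
      · intro x y _ _ hx hy
        have heq : LinearMap.rTensor M₂ (x * y)
            = LinearMap.rTensor M₂ x * LinearMap.rTensor M₂ y := by
          rw [Module.End.mul_eq_comp, Module.End.mul_eq_comp, LinearMap.rTensor_comp]
        rw [heq]
        exact mul_mem hx hy
    have hlT : ∀ q ∈ Algebra.adjoin ℂ (Set.range (LieModule.toEnd ℂ L₂ M₂)),
        LinearMap.lTensor M₁ q ∈ Algebra.adjoin ℂ
          (Set.range (LieModule.toEnd ℂ (L₁ × L₂) (M₁ ⊗[ℂ] M₂))) := by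
      intro p hp
      refine Algebra.adjoin_induction (hx := hp)
        (p := fun q _ => LinearMap.lTensor M₁ q ∈ Algebra.adjoin ℂ
          (Set.range (LieModule.toEnd ℂ (L₁ × L₂) (M₁ ⊗[ℂ] M₂)))) ?_ ?_ ?_ ?_
      · rintro _ ⟨x₂, rfl⟩
        have heq : LinearMap.lTensor M₁ (LieModule.toEnd ℂ L₂ M₂ x₂)
            = LieModule.toEnd ℂ (L₁ × L₂) (M₁ ⊗[ℂ] M₂) (0, x₂) := by
          apply TensorProduct.ext'
          intro m n
          simp only [LinearMap.lTensor_tmul, LieModule.toEnd_apply_apply]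
          rw [haction, zero_lie, TensorProduct.zero_tmul, zero_add]
        rw [heq]
        exact Algebra.subset_adjoin ⟨(0, x₂), rfl⟩
      · intro r
        have heq : LinearMap.lTensor M₁ (algebraMap ℂ (Module.End ℂ M₂) r)
            = algebraMap ℂ (Module.End ℂ (M₁ ⊗[ℂ] M₂)) r := by
          apply TensorProduct.ext'
          intro m n
          simp only [LinearMap.lTensor_tmul, Module.algebraMap_end_apply]
          rw [TensorProduct.tmul_smul]
        rw [heq]
        exact Subalgebra.algebraMap_mem _ r
      · intro x y _ _ hx hy
        rw [LinearMap.lTensor_add]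
        exact add_mem hx hy
      · intro x y _ _ hx hy
        have heq : LinearMap.lTensor M₁ (x * y)
            = LinearMap.lTensor M₁ x * LinearMap.lTensor M₁ y := by
          rw [Module.End.mul_eq_comp, Module.End.mul_eq_comp, LinearMap.lTensor_comp]
        rw [heq]
        exact mul_mem hx hy
    constructor
    · -- T j l ≠ ⊥
      obtain ⟨w0, hw0⟩ := exists_ne (0 : ↥Ws)
      obtain ⟨u0, hu0⟩ := exists_ne (0 : ↥Us)
      intro hbot
      have hmem : ι (w0 ⊗ₜ[ℂ] u0) ∈ (T j l : Submodule ℂ (M₁ ⊗[ℂ] M₂)) := by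
        rw [hT, ← hWs, ← hUs, ← hι_range]
        exact LinearMap.mem_range_self ι _
      rw [hbot, LieSubmodule.bot_toSubmodule, Submodule.mem_bot] at hmem
      have : (w0 ⊗ₜ[ℂ] u0 : ↥Ws ⊗[ℂ] ↥Us) = 0 := hι_inj (by rw [hmem, map_zero])
      exact my_tmul_ne_zero hw0 hu0 this
    · -- irreducibility
      intro T' hle
      by_cases hbot' : T' = ⊥
      · exact Or.inl hbot'
      right
      have hSle : (T' : Submodule ℂ (M₁ ⊗[ℂ] M₂)) ≤ LinearMap.range ι := by
        rw [hι_range]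
        intro x hx
        have := hle hx
        rw [← LieSubmodule.mem_toSubmodule, hT] at this
        exact this
      set S' : Submodule ℂ (↥Ws ⊗[ℂ] ↥Us) :=
        (T' : Submodule ℂ (M₁ ⊗[ℂ] M₂)).comap ι with hS'def
      have hS'map : S'.map ι = (T' : Submodule ℂ (M₁ ⊗[ℂ] M₂)) :=
        Submodule.map_comap_eq_self hSle
      have hS'ne : S' ≠ ⊥ := by
        intro h
        apply hbot'
        apply (LieSubmodule.toSubmodule_inj _ _).mp
        rw [LieSubmodule.bot_toSubmodule, ← hS'map, h, Submodule.map_bot]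
      have hstab : ∀ (a : Module.End ℂ ↥Ws) (b : Module.End ℂ ↥Us),
          ∀ s ∈ S', TensorProduct.map a b s ∈ S' := by
        intro a b s hs
        obtain ⟨p, hpA, hpw⟩ := exists_lift_end (W j) hWne (hWirr j).2 a
        obtain ⟨q, hqA, hqu⟩ := exists_lift_end (U l) hUne (hUirr l).2 b
        have hcomm : ι ∘ₗ TensorProduct.map a b = TensorProduct.map p q ∘ₗ ι := by
          apply TensorProduct.ext'
          intro w u
          simp only [LinearMap.comp_apply, TensorProduct.map_tmul, hιdef,
            TensorProduct.mapIncl, TensorProduct.map_tmul, Submodule.coe_subtype]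
          rw [hpw w, hqu u]
        show ι (TensorProduct.map a b s) ∈ (T' : Submodule ℂ (M₁ ⊗[ℂ] M₂))
        have h1 : ι (TensorProduct.map a b s) = TensorProduct.map p q (ι s) := by
          have := LinearMap.congr_fun hcomm s
          simpa only [LinearMap.comp_apply] using this
        rw [h1, ← LinearMap.rTensor_comp_lTensor, LinearMap.comp_apply]
        have h2 : LinearMap.lTensor M₁ q (ι s) ∈ T' :=
          lie_adjoin_stable T' (hlT q hqA) _ hs
        exact lie_adjoin_stable T' (hrT p hpA) _ h2
      have hS'top : S' = ⊤ := by
        obtain ⟨s, hsS, hs0⟩ := (Submodule.ne_bot_iff S').mp hS'ne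
        rw [eq_top_iff]
        intro t _
        obtain ⟨c, hc⟩ := Submodule.exists_isCompl (Submodule.span ℂ {s})
        set coordeq := LinearEquiv.toSpanNonzeroSingleton ℂ (↥Ws ⊗[ℂ] ↥Us) s hs0 with hcoordeq
        set f : Module.End ℂ (↥Ws ⊗[ℂ] ↥Us) :=
          (LinearMap.toSpanSingleton ℂ _ t) ∘ₗ (coordeq.symm : _ →ₗ[ℂ] ℂ) ∘ₗ
            Submodule.projectionOnto _ _ hc with hfdef
        have hfs : f s = t := by
          have hproj : Submodule.projectionOnto _ _ hc s
              = ⟨s, Submodule.mem_span_singleton_self s⟩ :=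
            Submodule.linearProjOfIsCompl_apply_left hc ⟨s, Submodule.mem_span_singleton_self s⟩
          have hcoord : coordeq.symm ⟨s, Submodule.mem_span_singleton_self s⟩ = 1 := by
            rw [show (⟨s, Submodule.mem_span_singleton_self s⟩ :
                ↥(Submodule.span ℂ {s})) = coordeq 1 from ?_, coordeq.symm_apply_apply]
            rw [hcoordeq]
            exact (LinearEquiv.toSpanNonzeroSingleton_one ℂ _ s hs0).symm
          rw [hfdef]
          simp only [LinearMap.comp_apply, hproj, LinearEquiv.coe_coe, hcoord]
          exact LinearMap.toSpanSingleton_apply_one ℂ _ t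
        set e := homTensorHomEquiv ℂ ↥Ws ↥Us ↥Ws ↥Us with hedef
        have hfeq : f = TensorProduct.homTensorHomMap (RingHom.id ℂ) ↥Ws ↥Us ↥Ws ↥Us (e.symm f) := by
          rw [← homTensorHomEquiv_apply, hedef, e.apply_symm_apply]
        have hmem : TensorProduct.homTensorHomMap (RingHom.id ℂ) ↥Ws ↥Us ↥Ws ↥Us (e.symm f) s ∈ S' := by
          generalize (e.symm f) = θ
          induction θ using TensorProduct.induction_on with
          | zero => simpa using S'.zero_mem
          | tmul a b =>
            rw [TensorProduct.homTensorHomMap_apply]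
            exact hstab a b s hsS
          | add θ₁ θ₂ ih₁ ih₂ =>
            rw [map_add, LinearMap.add_apply]
            exact S'.add_mem ih₁ ih₂
        rw [← hfeq, hfs] at hmem
        exact hmem
      apply (LieSubmodule.toSubmodule_inj _ _).mp
      rw [← hS'map, hS'top, Submodule.map_top, hι_range, hT]
  exact ⟨T, hT, hdisj, hsup, hirrT⟩
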